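/- Let f be an integrable complex-valued function on the unit circle, let n ≥ 1, and suppose D_n(f) ≠ 0, so that the monic reversed orthogonal polynomial Φ̂_n with respect to f exists. Then D_n(z^{−1} f(z)) = (−1)^n Φ̂_n(0) D_n(f). -/
import Mathlib


open Complex Real Filter Finset

noncomputable section

/-- The `k`-th Fourier coefficient of a function on the unit circle,
given as a function of the angle `θ`. -/
def fCoeff (h : ℝ → ℂ) (k : ℤ) : ℂ :=
  (1 / (2 * (Real.pi : ℂ))) *
    ∫ θ in (0:ℝ)..(2 * Real.pi), h θ * Complex.exp (-Complex.I * k * θ)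

/-- The `n`-dimensional Toeplitz determinant `D_n(h)`. -/
def toeplitzDet (h : ℝ → ℂ) (n : ℕ) : ℂ :=
  Matrix.det (Matrix.of fun j k : Fin n => fCoeff h ((j : ℤ) - (k : ℤ)))

/-- `P` is the monic orthogonal polynomial `Φ_k` of degree `k` for the weight `f`
on the unit circle. -/
def IsMonicOPUC (f : ℝ → ℂ) (k : ℕ) (P : Polynomial ℂ) : Prop :=
  P.Monic ∧ P.degree = k ∧
  ∀ j : ℕ, j < k →
    (1 / (2 * (Real.pi : ℂ))) * (∫ θ in (0:ℝ)..(2 * Real.pi),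
        P.eval (Complex.exp (Complex.I * θ)) * Complex.exp (-Complex.I * j * θ) * f θ) = 0

/-- `Q` is the monic reversed orthogonal polynomial `Φ̂_k` of degree `k` for the
weight `f` on the unit circle. -/
def IsMonicOPUCRev (f : ℝ → ℂ) (k : ℕ) (Q : Polynomial ℂ) : Prop :=
  Q.Monic ∧ Q.degree = k ∧
  ∀ j : ℕ, j < k →
    (1 / (2 * (Real.pi : ℂ))) * (∫ θ in (0:ℝ)..(2 * Real.pi),
        Q.eval (Complex.exp (-Complex.I * θ)) * Complex.exp (Complex.I * j * θ) * f θ) = 0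

lemma fCoeff_shift (f : ℝ → ℂ) (k : ℤ) :
    fCoeff (fun θ => Complex.exp (-Complex.I * θ) * f θ) k = fCoeff f (k + 1) := by
  unfold fCoeff
  congr 1
  apply intervalIntegral.integral_congr
  intro θ _
  simp only
  rw [show (-Complex.I * ((k+1 : ℤ) : ℂ) * (θ:ℂ)) = (-Complex.I * θ) + (-Complex.I * k * θ) by
    push_cast; ring, Complex.exp_add]
  ring

lemma orth_coeff (f : ℝ → ℂ) (hf : IntervalIntegrable f MeasureTheory.volume 0 (2 * Real.pi))
    (n : ℕ) (Q : Polynomial ℂ) (hQ : IsMonicOPUCRev f n Q) (j : ℕ) (hj : j < n) :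
    ∑ m ∈ Finset.range (n + 1), Q.coeff m * fCoeff f ((m : ℤ) - (j : ℤ)) = 0 := by
  obtain ⟨hmon, hdeg, hint⟩ := hQ
  have natdeg : Q.natDegree = n := Polynomial.natDegree_eq_of_degree_eq_some hdeg
  have hlt : Q.natDegree < n + 1 := by omega
  have key : ∀ θ : ℝ, Q.eval (Complex.exp (-Complex.I * θ)) * Complex.exp (Complex.I * j * θ) * f θ
      = ∑ m ∈ Finset.range (n + 1),
          Q.coeff m * (f θ * Complex.exp (-Complex.I * (((m : ℤ) - (j : ℤ) : ℤ) : ℂ) * θ)) := by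
    intro θ
    rw [Polynomial.eval_eq_sum_range' hlt, Finset.sum_mul, Finset.sum_mul]
    refine Finset.sum_congr rfl fun m _ => ?_
    have h1 : Complex.exp (-Complex.I * θ) ^ m = Complex.exp ((m : ℂ) * (-Complex.I * θ)) :=
      (Complex.exp_nat_mul _ m).symm
    have h2 : Complex.exp ((m : ℂ) * (-Complex.I * θ)) * Complex.exp (Complex.I * (j:ℂ) * θ)
        = Complex.exp (-Complex.I * (((m : ℤ) - (j : ℤ) : ℤ) : ℂ) * θ) := by
      rw [← Complex.exp_add]; congr 1; push_cast; ring
    calc Q.coeff m * Complex.exp (-Complex.I * θ) ^ m * Complex.exp (Complex.I * (j:ℂ) * θ) * f θ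
        = Q.coeff m * (f θ * (Complex.exp ((m : ℂ) * (-Complex.I * θ)) *
            Complex.exp (Complex.I * (j:ℂ) * θ))) := by rw [h1]; ring
      _ = _ := by rw [h2]
  have h0 := hint j hj
  have e1 : (∫ θ in (0:ℝ)..(2 * Real.pi),
        Q.eval (Complex.exp (-Complex.I * θ)) * Complex.exp (Complex.I * j * θ) * f θ)
      = ∫ θ in (0:ℝ)..(2 * Real.pi), ∑ m ∈ Finset.range (n + 1),
          Q.coeff m * (f θ * Complex.exp (-Complex.I * (((m : ℤ) - (j : ℤ) : ℤ) : ℂ) * θ)) :=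
    intervalIntegral.integral_congr fun θ _ => key θ
  rw [e1, intervalIntegral.integral_finset_sum (fun m _ => by
    apply IntervalIntegrable.const_mul
    exact hf.mul_continuousOn (Continuous.continuousOn (by continuity)))] at h0
  simp only [intervalIntegral.integral_const_mul] at h0
  rw [show (∑ m ∈ Finset.range (n + 1), Q.coeff m * fCoeff f ((m : ℤ) - (j : ℤ)))
      = (1 / (2 * (Real.pi : ℂ))) * ∑ m ∈ Finset.range (n + 1), Q.coeff m *
        ∫ θ in (0:ℝ)..(2 * Real.pi),
          f θ * Complex.exp (-Complex.I * (((m : ℤ) - (j : ℤ) : ℤ) : ℂ) * θ) from by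
    rw [Finset.mul_sum]; exact Finset.sum_congr rfl fun m _ => by rw [fCoeff]; ring]
  exact h0

/-- The relation (24): `D_n(z⁻¹ f(z)) = (-1)ⁿ Φ̂_n(0) D_n(f)`. -/
theorem toeplitz_det_shift_down
    (f : ℝ → ℂ) (hf : IntervalIntegrable f MeasureTheory.volume 0 (2 * Real.pi))
    (n : ℕ) (hn : 1 ≤ n)
    (hD : toeplitzDet f n ≠ 0)
    (Q : Polynomial ℂ) (hQ : IsMonicOPUCRev f n Q) :
    toeplitzDet (fun θ => Complex.exp (-Complex.I * θ) * f θ) n =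
      (-1 : ℂ) ^ n * Q.eval 0 * toeplitzDet f n := by
  obtain ⟨N, rfl⟩ : ∃ N, n = N + 1 := ⟨n - 1, (Nat.succ_pred_eq_of_pos hn).symm⟩
  have natdeg : Q.natDegree = N + 1 := Polynomial.natDegree_eq_of_degree_eq_some hQ.2.1
  have hcoefftop : Q.coeff (N + 1) = 1 := by rw [← natdeg]; exact hQ.1.coeff_natDegree
  -- the row relation
  have hrow : ∀ k : Fin (N + 1), fCoeff f (((N + 1 : ℕ) : ℤ) - (k : ℤ))
      = ∑ m ∈ Finset.range (N + 1), -(Q.coeff m) * fCoeff f ((m : ℤ) - (k : ℤ)) := by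
    intro k
    have h := orth_coeff f hf (N + 1) Q hQ k k.isLt
    rw [Finset.sum_range_succ, hcoefftop, one_mul] at h
    have h2 : (∑ m ∈ Finset.range (N + 1), -(Q.coeff m) * fCoeff f ((m : ℤ) - (k : ℤ)))
        = -(∑ m ∈ Finset.range (N + 1), Q.coeff m * fCoeff f ((m : ℤ) - (k : ℤ))) := by
      rw [← Finset.sum_neg_distrib]
      exact Finset.sum_congr rfl fun m _ => neg_mul _ _
    rw [h2]
    exact eq_neg_of_add_eq_zero_right h
  set A : Matrix (Fin (N + 1)) (Fin (N + 1)) ℂ :=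
    Matrix.of fun j k : Fin (N + 1) => fCoeff f ((j : ℤ) - (k : ℤ)) with hA
  set σ : Equiv.Perm (Fin (N + 1)) := finRotate (N + 1) with hσ
  set M : Matrix (Fin (N + 1)) (Fin (N + 1)) ℂ := A.submatrix σ id with hM
  set c : Fin (N + 1) → ℂ := fun k => -(Q.coeff (σ k)) with hc
  set B : Matrix (Fin (N + 1)) (Fin (N + 1)) ℂ :=
    Matrix.of fun j k : Fin (N + 1) => fCoeff f ((j : ℤ) + 1 - (k : ℤ)) with hB
  have hBM : B = M.updateRow (Fin.last N) (∑ k, c k • M k) := by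
    ext i k'
    by_cases hi : i = Fin.last N
    · subst hi
      rw [Matrix.updateRow_self]
      have hsum : (∑ k, c k • M k) k' = ∑ m : Fin (N + 1), -(Q.coeff m) * A m k' := by
        rw [Finset.sum_apply]
        exact Fintype.sum_equiv σ _ _ fun k => by
          simp [hc, hM, Matrix.submatrix_apply]
      rw [hsum]
      have : ∑ m : Fin (N + 1), -(Q.coeff m) * A m k'
          = ∑ m ∈ Finset.range (N + 1), -(Q.coeff m) * fCoeff f ((m : ℤ) - (k' : ℤ)) := by
        simp only [hA, Matrix.of_apply]
        exact Fin.sum_univ_eq_sum_range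
          (fun m : ℕ => -(Q.coeff m) * fCoeff f ((m : ℤ) - (k' : ℤ))) (N + 1)
      rw [this, ← hrow k']
      show fCoeff f (((Fin.last N : Fin (N+1)) : ℤ) + 1 - (k' : ℤ)) = _
      congr 1
    · rw [Matrix.updateRow_ne hi]
      show fCoeff f ((i : ℤ) + 1 - (k' : ℤ)) = A (σ i) k'
      have hlt : i < Fin.last N := lt_of_le_of_ne (Fin.le_last i) hi
      have : σ i = i + 1 := finRotate_succ_apply i
      rw [this]
      show fCoeff f ((i : ℤ) + 1 - (k' : ℤ)) = fCoeff f (((i + 1 : Fin (N+1)) : ℤ) - (k' : ℤ))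
      congr 1
      rw [Fin.val_add_one_of_lt hlt]
      push_cast
      ring
  have hdetM : M.det = ((-1 : ℂ) ^ N) * A.det := by
    rw [hM, Matrix.det_permute, hσ, sign_finRotate]
    simp
  have hσlast : σ (Fin.last N) = 0 := by
    rw [hσ, finRotate_succ_apply]
    simp
  have hdetB : B.det = (-1 : ℂ) ^ (N + 1) * Q.coeff 0 * A.det := by
    rw [hBM, Matrix.det_updateRow_sum, hdetM, hc]
    simp only [hσlast]
    show -(Q.coeff ((0 : Fin (N+1)) : ℕ)) * ((-1 : ℂ) ^ N * A.det) = _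
    simp only [Fin.val_zero]
    ring
  -- assemble
  have hTg : toeplitzDet (fun θ => Complex.exp (-Complex.I * θ) * f θ) (N + 1) = B.det := by
    unfold toeplitzDet
    congr 1
    ext j k
    rw [Matrix.of_apply, fCoeff_shift]
    simp only [hB, Matrix.of_apply]
    congr 1
    ring
  have hTf : toeplitzDet f (N + 1) = A.det := rfl
  rw [hTg, hTf, hdetB, ← Polynomial.coeff_zero_eq_eval_zero]
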